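/- Let d ≥ 2 and let (x,t),(y,s) be two points of the solid double cone X that both lie in the upper part X₊ or both lie in the lower part X₋. Then |t − s| ≤ d_X((x,t),(y,s)), |√(1−t²) − √(1−s²)| ≤ d_X((x,t),(y,s)), and |√(t²−‖x‖²) − √(s²−‖y‖²)| ≤ (√2 + π)·d_X((x,t),(y,s)). -/

import Mathlib

open MeasureTheory Real Set

noncomputable section

/-- The solid double cone `X = {(x,t) ∈ ℝ^d × ℝ : ‖x‖ ≤ |t| ≤ 1}`. -/
def Xc (d : ℕ) : Set (EuclideanSpace ℝ (Fin d) × ℝ) :=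
  {p | ‖p.1‖ ≤ |p.2| ∧ |p.2| ≤ 1}

/-- The distance
`d_X((x,t),(y,s)) = arccos(⟨x,y⟩ + √(t²−‖x‖²)√(s²−‖y‖²) + √(1−t²)√(1−s²))`. -/
def dXc {d : ℕ} (p q : EuclideanSpace ℝ (Fin d) × ℝ) : ℝ :=
  Real.arccos ((inner ℝ p.1 q.1 : ℝ) +
    Real.sqrt (p.2 ^ 2 - ‖p.1‖ ^ 2) * Real.sqrt (q.2 ^ 2 - ‖q.1‖ ^ 2) +
    Real.sqrt (1 - p.2 ^ 2) * Real.sqrt (1 - q.2 ^ 2))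

/-- The ball `c((x,t),r) = {(y,s) ∈ X : d_X((x,t),(y,s)) ≤ r}`. -/
def capX {d : ℕ} (p : EuclideanSpace ℝ (Fin d) × ℝ) (r : ℝ) :
    Set (EuclideanSpace ℝ (Fin d) × ℝ) :=
  {q ∈ Xc d | dXc p q ≤ r}

/-- `arccos` is antitone. -/
lemma arccos_le_arccos' {x y : ℝ} (h : x ≤ y) : Real.arccos y ≤ Real.arccos x := by
  unfold Real.arccos
  linarith [Real.monotone_arcsin h]

lemma abs_cos_sub_cos_le (a b : ℝ) : |Real.cos a - Real.cos b| ≤ |a - b| := by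
  rw [Real.cos_sub_cos]
  have h1 : |Real.sin ((a + b) / 2)| ≤ 1 :=
    abs_le.2 ⟨Real.neg_one_le_sin _, Real.sin_le_one _⟩
  have h2 : |Real.sin ((a - b) / 2)| ≤ |(a - b) / 2| := Real.abs_sin_le_abs
  have h3 : |(a - b) / 2| = |a - b| / 2 := by rw [abs_div]; norm_num
  calc |(-2) * Real.sin ((a + b) / 2) * Real.sin ((a - b) / 2)|
      = 2 * |Real.sin ((a + b) / 2)| * |Real.sin ((a - b) / 2)| := by
        rw [abs_mul, abs_mul]; norm_num
    _ ≤ 2 * 1 * (|a - b| / 2) := by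
        apply mul_le_mul _ (h3 ▸ h2) (abs_nonneg _) (by norm_num)
        nlinarith [abs_nonneg (Real.sin ((a + b) / 2))]
    _ = |a - b| := by ring

lemma abs_sin_sub_sin_le (a b : ℝ) : |Real.sin a - Real.sin b| ≤ |a - b| := by
  rw [Real.sin_sub_sin]
  have h1 : |Real.cos ((a + b) / 2)| ≤ 1 := Real.abs_cos_le_one _
  have h2 : |Real.sin ((a - b) / 2)| ≤ |(a - b) / 2| := Real.abs_sin_le_abs
  have h3 : |(a - b) / 2| = |a - b| / 2 := by rw [abs_div]; norm_num
  calc |2 * Real.sin ((a - b) / 2) * Real.cos ((a + b) / 2)|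
      = 2 * |Real.sin ((a - b) / 2)| * |Real.cos ((a + b) / 2)| := by
        rw [abs_mul, abs_mul]; norm_num
    _ ≤ 2 * (|a - b| / 2) * 1 := by
        apply mul_le_mul _ h1 (abs_nonneg _) (by positivity)
        nlinarith [abs_nonneg (Real.sin ((a - b) / 2))]
    _ = |a - b| := by ring


/-- Cauchy–Schwarz in `ℝ²` form used below. -/
lemma cs2' {nx ny bp bq u v : ℝ} (hnx : 0 ≤ nx) (hny : 0 ≤ ny)
    (hbp : 0 ≤ bp) (hbq : 0 ≤ bq) (hu : 0 ≤ u) (hv : 0 ≤ v)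
    (h1 : nx ^ 2 + bp ^ 2 = u ^ 2) (h2 : ny ^ 2 + bq ^ 2 = v ^ 2) :
    nx * ny + bp * bq ≤ u * v := by
  have hL : 0 ≤ nx * ny + bp * bq := by positivity
  have hsq : (nx * ny + bp * bq) ^ 2 ≤ (u * v) ^ 2 := by
    nlinarith [sq_nonneg (nx * bq - ny * bp)]
  calc nx * ny + bp * bq = Real.sqrt ((nx * ny + bp * bq) ^ 2) :=
        (Real.sqrt_sq hL).symm
    _ ≤ Real.sqrt ((u * v) ^ 2) := Real.sqrt_le_sqrt hsq
    _ = u * v := Real.sqrt_sq (by positivity)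

set_option maxHeartbeats 1000000 in
/-- The core real-variable inequality behind statement 11. -/
lemma stmt11_real (nx ny a t s : ℝ) (hnx : 0 ≤ nx) (hny : 0 ≤ ny)
    (hx : nx ≤ |t|) (ht : |t| ≤ 1) (hy : ny ≤ |s|) (hs : |s| ≤ 1)
    (haCS : |a| ≤ nx * ny) (hts : |t| * |s| = t * s) :
    |t - s| ≤ Real.arccos (a + Real.sqrt (t ^ 2 - nx ^ 2) * Real.sqrt (s ^ 2 - ny ^ 2) +
      Real.sqrt (1 - t ^ 2) * Real.sqrt (1 - s ^ 2)) ∧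
    |Real.sqrt (1 - t ^ 2) - Real.sqrt (1 - s ^ 2)| ≤
      Real.arccos (a + Real.sqrt (t ^ 2 - nx ^ 2) * Real.sqrt (s ^ 2 - ny ^ 2) +
      Real.sqrt (1 - t ^ 2) * Real.sqrt (1 - s ^ 2)) ∧
    |Real.sqrt (t ^ 2 - nx ^ 2) - Real.sqrt (s ^ 2 - ny ^ 2)| ≤
      (Real.sqrt 2 + π) * Real.arccos (a + Real.sqrt (t ^ 2 - nx ^ 2) *
        Real.sqrt (s ^ 2 - ny ^ 2) + Real.sqrt (1 - t ^ 2) * Real.sqrt (1 - s ^ 2)) := by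
  set bp := Real.sqrt (t ^ 2 - nx ^ 2) with hbpdef
  set bq := Real.sqrt (s ^ 2 - ny ^ 2) with hbqdef
  set cp := Real.sqrt (1 - t ^ 2) with hcpdef
  set cq := Real.sqrt (1 - s ^ 2) with hcqdef
  have hx2 : nx ^ 2 ≤ t ^ 2 := by
    calc nx ^ 2 ≤ |t| ^ 2 := pow_le_pow_left₀ hnx hx 2
      _ = t ^ 2 := sq_abs t
  have ht2 : t ^ 2 ≤ 1 := by
    have := pow_le_one₀ (abs_nonneg t) ht (n := 2)
    rwa [sq_abs] at this
  have hy2 : ny ^ 2 ≤ s ^ 2 := by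
    calc ny ^ 2 ≤ |s| ^ 2 := pow_le_pow_left₀ hny hy 2
      _ = s ^ 2 := sq_abs s
  have hs2 : s ^ 2 ≤ 1 := by
    have := pow_le_one₀ (abs_nonneg s) hs (n := 2)
    rwa [sq_abs] at this
  have hbp2 : bp ^ 2 = t ^ 2 - nx ^ 2 := Real.sq_sqrt (by linarith)
  have hbq2 : bq ^ 2 = s ^ 2 - ny ^ 2 := Real.sq_sqrt (by linarith)
  have hcp2 : cp ^ 2 = 1 - t ^ 2 := Real.sq_sqrt (by linarith)
  have hcq2 : cq ^ 2 = 1 - s ^ 2 := Real.sq_sqrt (by linarith)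
  have hbp0 : 0 ≤ bp := Real.sqrt_nonneg _
  have hbq0 : 0 ≤ bq := Real.sqrt_nonneg _
  have hcp0 : 0 ≤ cp := Real.sqrt_nonneg _
  have hcq0 : 0 ≤ cq := Real.sqrt_nonneg _
  have haCS1 : a ≤ nx * ny := (abs_le.1 haCS).2
  have haCS2 : -(nx * ny) ≤ a := (abs_le.1 haCS).1
  have key2 : nx * ny + bp * bq ≤ |t| * |s| :=
    cs2' hnx hny hbp0 hbq0 (abs_nonneg t) (abs_nonneg s)
      (by rw [hbp2, ← sq_abs t]; ring) (by rw [hbq2, ← sq_abs s]; ring)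
  set A : ℝ := a + bp * bq + cp * cq with hAdef
  have hsum1 : nx ^ 2 + bp ^ 2 + cp ^ 2 = 1 := by rw [hbp2, hcp2]; ring
  have hsum2 : ny ^ 2 + bq ^ 2 + cq ^ 2 = 1 := by rw [hbq2, hcq2]; ring
  have hA1 : A ≤ 1 := by
    have e1 := two_mul_le_add_sq nx ny
    have e2 := two_mul_le_add_sq bp bq
    have e3 := two_mul_le_add_sq cp cq
    rw [hAdef]; linarith
  have hA2 : -1 ≤ A := by
    have h0 : nx * ny ≤ |t| * |s| :=
      mul_le_mul hx hy hny (abs_nonneg t)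
    have h1 : |t| * |s| ≤ 1 := by
      calc |t| * |s| ≤ 1 * 1 := mul_le_mul ht hs (abs_nonneg s) one_pos.le
        _ = 1 := one_mul 1
    have h2 := mul_nonneg hbp0 hbq0
    have h3 := mul_nonneg hcp0 hcq0
    rw [hAdef]; linarith
  set θ := Real.arccos A with hθdef
  have hθ0 : 0 ≤ θ := Real.arccos_nonneg A
  set α := Real.arccos t with hαdef
  set β := Real.arccos s with hβdef
  have ht1 := abs_le.1 ht
  have hs1 := abs_le.1 hs
  have hcosα : Real.cos α = t := Real.cos_arccos ht1.1 ht1.2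
  have hcosβ : Real.cos β = s := Real.cos_arccos hs1.1 hs1.2
  have hsinα : Real.sin α = cp := Real.sin_arccos t
  have hsinβ : Real.sin β = cq := Real.sin_arccos s
  have hαβπ : |α - β| ≤ π := by
    have h1 := Real.arccos_nonneg t
    have h2 := Real.arccos_nonneg s
    have h3 := Real.arccos_le_pi t
    have h4 := Real.arccos_le_pi s
    rw [abs_le]; constructor <;> [linarith; linarith]
  have hAcos : A ≤ Real.cos (α - β) := by
    rw [Real.cos_sub, hcosα, hcosβ, hsinα, hsinβ]
    have : a + bp * bq ≤ t * s := by rw [← hts]; linarith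
    linarith
  have hαβ : |α - β| ≤ θ := by
    have h1 : Real.arccos (Real.cos |α - β|) = |α - β| :=
      Real.arccos_cos (abs_nonneg _) hαβπ
    have h2 : A ≤ Real.cos |α - β| := by rwa [Real.cos_abs]
    calc |α - β| = Real.arccos (Real.cos |α - β|) := h1.symm
      _ ≤ Real.arccos A := arccos_le_arccos' h2
  refine ⟨?_, ?_, ?_⟩
  · calc |t - s| = |Real.cos α - Real.cos β| := by rw [hcosα, hcosβ]
      _ ≤ |α - β| := _root_.abs_cos_sub_cos_le α β
      _ ≤ θ := hαβ
  · calc |cp - cq| = |Real.sin α - Real.sin β| := by rw [hsinα, hsinβ]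
      _ ≤ |α - β| := _root_.abs_sin_sub_sin_le α β
      _ ≤ θ := hαβ
  · have hcosθ : Real.cos θ = A := Real.cos_arccos hA2 hA1
    have hchord : (bp - bq) ^ 2 ≤ 2 - 2 * A := by
      have hxy : 0 ≤ nx ^ 2 - 2 * a + ny ^ 2 := by
        have := two_mul_le_add_sq nx ny
        linarith
      have hsum1 : nx ^ 2 + bp ^ 2 + cp ^ 2 = 1 := by rw [hbp2, hcp2]; ring
      have hsum2 : ny ^ 2 + bq ^ 2 + cq ^ 2 = 1 := by rw [hbq2, hcq2]; ring
      have hexp : 2 - 2 * A =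
          (nx ^ 2 - 2 * a + ny ^ 2) + (bp - bq) ^ 2 + (cp - cq) ^ 2 := by
        rw [hAdef]; linear_combination -hsum1 - hsum2
      have := sq_nonneg (cp - cq)
      linarith
    have hcosbd : 2 - 2 * A ≤ θ ^ 2 := by
      have := Real.one_sub_sq_div_two_le_cos (x := θ)
      rw [hcosθ] at this
      linarith
    have hbb : |bp - bq| ≤ θ := by
      have h1 : (bp - bq) ^ 2 ≤ θ ^ 2 := le_trans hchord hcosbd
      calc |bp - bq| = Real.sqrt ((bp - bq) ^ 2) := (Real.sqrt_sq_eq_abs _).symm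
        _ ≤ Real.sqrt (θ ^ 2) := Real.sqrt_le_sqrt h1
        _ = θ := Real.sqrt_sq hθ0
    have hconst : (1 : ℝ) ≤ Real.sqrt 2 + π := by
      have := Real.pi_gt_three
      have := Real.sqrt_nonneg 2
      linarith
    calc |bp - bq| ≤ θ := hbb
      _ = 1 * θ := (one_mul _).symm
      _ ≤ (Real.sqrt 2 + π) * θ := mul_le_mul_of_nonneg_right hconst hθ0

/-- if `(x,t),(y,s) ∈ X` both lie in the upper part `X₊` or both in
the lower part `X₋`, then `|t − s| ≤ d_X`, `|√(1−t²) − √(1−s²)| ≤ d_X`, and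
`|√(t²−‖x‖²) − √(s²−‖y‖²)| ≤ (√2 + π) d_X`. -/
theorem stmt11 (d : ℕ) (hd : 2 ≤ d) (p q : EuclideanSpace ℝ (Fin d) × ℝ)
    (hp : p ∈ Xc d) (hq : q ∈ Xc d)
    (hsign : (0 ≤ p.2 ∧ 0 ≤ q.2) ∨ (p.2 ≤ 0 ∧ q.2 ≤ 0)) :
    |p.2 - q.2| ≤ dXc p q ∧
    |Real.sqrt (1 - p.2 ^ 2) - Real.sqrt (1 - q.2 ^ 2)| ≤ dXc p q ∧
    |Real.sqrt (p.2 ^ 2 - ‖p.1‖ ^ 2) - Real.sqrt (q.2 ^ 2 - ‖q.1‖ ^ 2)| ≤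
      (Real.sqrt 2 + π) * dXc p q := by
  obtain ⟨hx, ht⟩ := hp
  obtain ⟨hy, hs⟩ := hq
  have hts : |p.2| * |q.2| = p.2 * q.2 := by
    rcases hsign with ⟨h1, h2⟩ | ⟨h1, h2⟩
    · rw [abs_of_nonneg h1, abs_of_nonneg h2]
    · rw [abs_of_nonpos h1, abs_of_nonpos h2]; ring
  exact stmt11_real ‖p.1‖ ‖q.1‖ (inner ℝ p.1 q.1) p.2 q.2 (norm_nonneg _)
    (norm_nonneg _) hx ht hy hs (abs_real_inner_le_norm _ _) hts
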